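/- arXiv:1307.5547 — 4 statements merged into one kernel-verified Lean document; each statement's English description precedes it below -/
import Mathlib

section
/- Let G be a connected probe interval graph. Every consecutive-ones ordered clique matrix of G**, when interpreted as a probe interval model with probes P and non-probes N ∖ N_S, is a normal probe interval model of G − N_S. -/
open Set

/-- A set of columns is consecutive in the column order. -/
def ConsecSet {k : ℕ} (A : Set (Fin k)) : Prop :=
  ∀ i j l : Fin k, i ≤ j → j ≤ l → i ∈ A → l ∈ A → j ∈ A

/-- Every row of the 0-1 matrix `M` has a nonempty consecutive block of 1's. -/
def RowsOK {V : Type} {k : ℕ} (M : V → Fin k → Prop) : Prop :=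
  ∀ v : V, {j | M v j}.Nonempty ∧ ConsecSet {j | M v j}

/-- The matrix `M` represents exactly the adjacencies of `G`, where `P` is the probe set:
two distinct vertices are adjacent iff some column has a 1 in both rows and at least
one of the two vertices is a probe. -/
def Represents {V : Type} {k : ℕ} (G : SimpleGraph V) (P : Set V)
    (M : V → Fin k → Prop) : Prop :=
  ∀ u v : V, u ≠ v → (G.Adj u v ↔ (u ∈ P ∨ v ∈ P) ∧ ∃ j, M u j ∧ M v j)

/-- `M` is a probe interval model of `G` with probe set `P`. -/
def IsPIModel {V : Type} {k : ℕ} (G : SimpleGraph V) (P : Set V)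
    (M : V → Fin k → Prop) : Prop :=
  RowsOK M ∧ Represents G P M

/-- The pairs of vertices that the matrix represents as adjacent. -/
def RepAdj {V : Type} {k : ℕ} (P : Set V) (M : V → Fin k → Prop) (u v : V) : Prop :=
  u ≠ v ∧ (u ∈ P ∨ v ∈ P) ∧ ∃ j, M u j ∧ M v j

/-- `c` is the left endpoint of row `v`: the first column where the row has a 1. -/
def IsLeftEnd {V : Type} {k : ℕ} (M : V → Fin k → Prop) (v : V) (c : Fin k) : Prop :=
  M v c ∧ ∀ j, M v j → c ≤ j

/-- `c` is the right endpoint of row `v`: the last column where the row has a 1. -/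
def IsRightEnd {V : Type} {k : ℕ} (M : V → Fin k → Prop) (v : V) (c : Fin k) : Prop :=
  M v c ∧ ∀ j, M v j → j ≤ c

/-- A proper left endpoint: the left endpoint of a row with a 1 in more than one column. -/
def IsProperLeftEnd {V : Type} {k : ℕ} (M : V → Fin k → Prop) (v : V) (c : Fin k) : Prop :=
  IsLeftEnd M v c ∧ ∃ j, M v j ∧ j ≠ c

/-- A proper right endpoint: the right endpoint of a row with a 1 in more than one column. -/
def IsProperRightEnd {V : Type} {k : ℕ} (M : V → Fin k → Prop) (v : V) (c : Fin k) : Prop :=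
  IsRightEnd M v c ∧ ∃ j, M v j ∧ j ≠ c

/-- `M'` is obtained from `M` by a contraction of row `v`: the first or last 1 of
row `v` is changed to a 0, resulting in a shorter (still nonempty) interval. -/
def Contraction {V : Type} {k : ℕ} (M M' : V → Fin k → Prop) (v : V) : Prop :=
  ∃ c : Fin k, (IsProperLeftEnd M v c ∨ IsProperRightEnd M v c) ∧
    ∀ u j, M' u j ↔ M u j ∧ ¬(u = v ∧ j = c)

/-- Row `v` is taut: every contraction of it changes the set of vertex pairs that
the matrix represents as adjacent. -/
def TautRow {V : Type} {k : ℕ} (P : Set V) (M : V → Fin k → Prop) (v : V) : Prop :=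
  ∀ M' : V → Fin k → Prop, Contraction M M' v → RepAdj P M' ≠ RepAdj P M

/-- Every row of the model is taut. -/
def Taut {V : Type} {k : ℕ} (P : Set V) (M : V → Fin k → Prop) : Prop :=
  ∀ v : V, TautRow P M v

/-- The matrix obtained from `M` by merging the consecutive columns `i` and `i + 1`
(replacing them by their entrywise OR). -/
def mergeCols {V : Type} {k : ℕ} (M : V → Fin k → Prop) (i : ℕ) :
    V → Fin (k - 1) → Prop := fun v j =>
  if h1 : j.val < i then M v ⟨j.val, by have := j.isLt; omega⟩
  else if h2 : j.val = i then
    M v ⟨i, by have := j.isLt; omega⟩ ∨ M v ⟨i + 1, by have := j.isLt; omega⟩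
  else M v ⟨j.val + 1, by have := j.isLt; omega⟩

/-- The consecutive columns `i` and `i + 1` of the model `M` of `G` can be merged:
replacing them by their entrywise OR again yields a probe interval model representing
the same adjacencies. -/
def CanMerge {V : Type} {k : ℕ} (G : SimpleGraph V) (P : Set V)
    (M : V → Fin k → Prop) (i : ℕ) : Prop :=
  i + 1 < k ∧ IsPIModel G P (mergeCols M i)

/-- No two consecutive columns of the model can be merged. -/
def MinimalModel {V : Type} {k : ℕ} (G : SimpleGraph V) (P : Set V)
    (M : V → Fin k → Prop) : Prop :=
  ∀ i : ℕ, ¬ CanMerge G P M i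

/-- A normal probe interval model: a probe interval model that is taut and minimal. -/
def IsNormalModel {V : Type} {k : ℕ} (G : SimpleGraph V) (P : Set V)
    (M : V → Fin k → Prop) : Prop :=
  IsPIModel G P M ∧ Taut P M ∧ MinimalModel G P M

/-- The vertex set of a column: the vertices whose rows have a 1 in that column. -/
def colVerts {V : Type} {k : ℕ} (M : V → Fin k → Prop) (j : Fin k) : Set V :=
  {v | M v j}

/-- The probe set of a column. -/
def probeSetCol {V : Type} {k : ℕ} (P : Set V) (M : V → Fin k → Prop)
    (j : Fin k) : Set V :=
  {v | v ∈ P ∧ M v j}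

/-- The probe set of the column with (natural number) index `n`, empty if out of range. -/
def probeSetAt {W : Type} {K : ℕ} (P : Set W) (M : W → Fin K → Prop) (n : ℕ) : Set W :=
  {v | v ∈ P ∧ ∃ hn : n < K, M v ⟨n, hn⟩}

/-- `G` is a probe interval graph with respect to the probe set `P`. -/
def IsPIGraph {V : Type} (G : SimpleGraph V) (P : Set V) : Prop :=
  ∃ (k : ℕ) (M : V → Fin k → Prop), IsPIModel G P M

/-- `x` is a simplicial non-probe: a non-probe whose neighborhood induces a
complete subgraph. -/
def SimpNonProbe {V : Type} (G : SimpleGraph V) (P : Set V) (x : V) : Prop :=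
  x ∉ P ∧ G.IsClique (G.neighborSet x)

/-- The set `N_S` of simplicial non-probes. -/
def setNS {V : Type} (G : SimpleGraph V) (P : Set V) : Set V :=
  {x | SimpNonProbe G P x}

/-- `K` is (the vertex set of) a maximal complete subgraph of `H`. -/
def IsMaxClique {W : Type} (H : SimpleGraph W) (K : Set W) : Prop :=
  H.IsClique K ∧ ∀ K' : Set W, H.IsClique K' → K ⊆ K' → K' = K

/-- `K` is (the vertex set of) a maximal complete subgraph of `G[P]`. -/
def IsMaxPClique {V : Type} (G : SimpleGraph V) (P : Set V) (K : Set V) : Prop :=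
  (K ⊆ P ∧ K.Pairwise G.Adj) ∧
    ∀ K' : Set V, K' ⊆ P → K'.Pairwise G.Adj → K ⊆ K' → K' = K

/-- A clique column: its vertex set contains a clique of `G[P]`. -/
def IsCliqueCol {V : Type} {k : ℕ} (G : SimpleGraph V) (P : Set V)
    (M : V → Fin k → Prop) (j : Fin k) : Prop :=
  ∃ K : Set V, IsMaxPClique G P K ∧ K ⊆ colVerts M j

/-- A left semi-clique column: it contains a proper right endpoint of a probe and a
proper left endpoint of a non-probe, but no left endpoint of a probe and no right
endpoint of a non-probe. -/
def IsLeftSemiCol {V : Type} {k : ℕ} (P : Set V) (M : V → Fin k → Prop)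
    (j : Fin k) : Prop :=
  (∃ p ∈ P, IsProperRightEnd M p j) ∧ (∃ x, x ∉ P ∧ IsProperLeftEnd M x j) ∧
    (∀ p ∈ P, ¬ IsLeftEnd M p j) ∧ (∀ x, x ∉ P → ¬ IsRightEnd M x j)

/-- A right semi-clique column (symmetric to a left semi-clique column). -/
def IsRightSemiCol {V : Type} {k : ℕ} (P : Set V) (M : V → Fin k → Prop)
    (j : Fin k) : Prop :=
  (∃ p ∈ P, IsProperLeftEnd M p j) ∧ (∃ x, x ∉ P ∧ IsProperRightEnd M x j) ∧
    (∀ p ∈ P, ¬ IsRightEnd M p j) ∧ (∀ x, x ∉ P → ¬ IsLeftEnd M x j)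

/-- A semi-clique column: a left or right semi-clique column. -/
def IsSemiCol {V : Type} {k : ℕ} (P : Set V) (M : V → Fin k → Prop)
    (j : Fin k) : Prop :=
  IsLeftSemiCol P M j ∨ IsRightSemiCol P M j

/-- A simplicial column: not a clique column, its vertex set contains a simplicial
non-probe, and it contains no endpoint of a non-simplicial non-probe. -/
def IsSimpCol {V : Type} {k : ℕ} (G : SimpleGraph V) (P : Set V)
    (M : V → Fin k → Prop) (j : Fin k) : Prop :=
  ¬ IsCliqueCol G P M j ∧ (∃ x, SimpNonProbe G P x ∧ M x j) ∧
    ∀ x, x ∉ P → ¬ SimpNonProbe G P x → ¬ IsLeftEnd M x j ∧ ¬ IsRightEnd M x j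

/-- The probe set of the induced subgraph `G - N_S` on `V \ N_S`. -/
def probesPS {V : Type} (G : SimpleGraph V) (P : Set V) : Set ↥((setNS G P)ᶜ) :=
  {v | (v : V) ∈ P}

/-- The graph `G**` on `V \ N_S`: its edges are those of `G - N_S` together with the
pairs `x y` of non-probes such that `N(x) ∩ N(y)` equals a clique of `G[P]` or
contains two nonadjacent vertices. -/
def Gss {V : Type} (G : SimpleGraph V) (P : Set V) : SimpleGraph ↥((setNS G P)ᶜ) :=
  SimpleGraph.fromRel (fun u v =>
    G.Adj (u : V) (v : V) ∨
      ((u : V) ∉ P ∧ (v : V) ∉ P ∧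
        ((∃ K : Set V, IsMaxPClique G P K ∧
            G.neighborSet (u : V) ∩ G.neighborSet (v : V) = K) ∨
          (∃ a b : V, a ∈ G.neighborSet (u : V) ∩ G.neighborSet (v : V) ∧
            b ∈ G.neighborSet (u : V) ∩ G.neighborSet (v : V) ∧
            a ≠ b ∧ ¬ G.Adj a b))))

/-- `M` is a consecutive-ones ordered clique matrix of `H`: it has one column per
maximal clique of `H`, with a 1 in row `v` and column `K` exactly when `v ∈ K`, and
the 1's in every row are consecutive. -/
def IsC1CliqueMatrix {W : Type} (H : SimpleGraph W) {k : ℕ}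
    (M : W → Fin k → Prop) : Prop :=
  (∃ f : Fin k → Set W, Function.Injective f ∧
      (∀ j, IsMaxClique H (f j)) ∧ (∀ K, IsMaxClique H K → ∃ j, f j = K) ∧
      (∀ v j, M v j ↔ v ∈ f j)) ∧
    ∀ v : W, ConsecSet {j | M v j}

/-- A 0-1 matrix (with rows indexed by `R`) has the consecutive-ones property. -/
def HasC1P {R : Type} {n : ℕ} (M : R → Fin n → Prop) : Prop :=
  ∃ σ : Equiv.Perm (Fin n), ∀ r, ConsecSet {j | M r (σ j)}

/-- Two sets properly overlap. -/
def ProperOverlap {α : Type} (A B : Set α) : Prop :=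
  (A ∩ B).Nonempty ∧ (A \ B).Nonempty ∧ (B \ A).Nonempty

section AuxStmt11

open SimpleGraph

lemma exists_maxClique {W : Type} (H : SimpleGraph W) {s : Set W} (hs : H.IsClique s) :
    ∃ K, IsMaxClique H K ∧ s ⊆ K := by
  have hch : ∀ c ⊆ {K : Set W | H.IsClique K}, IsChain (· ⊆ ·) c → c.Nonempty →
      ∃ ub ∈ {K : Set W | H.IsClique K}, ∀ t ∈ c, t ⊆ ub := by
    intro c hcS hchain _
    refine ⟨⋃₀ c, ?_, fun t ht => Set.subset_sUnion_of_mem ht⟩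
    rw [Set.mem_setOf_eq, SimpleGraph.isClique_iff]
    rintro x ⟨A, hA, hxA⟩ y ⟨B, hB, hyB⟩ hxy
    rcases hchain.total hA hB with h | h
    · exact (SimpleGraph.isClique_iff _).mp (hcS hB) (h hxA) hyB hxy
    · exact (SimpleGraph.isClique_iff _).mp (hcS hA) hxA (h hyB) hxy
  obtain ⟨m, hsm, hm⟩ := zorn_subset_nonempty {K : Set W | H.IsClique K} hch s hs
  exact ⟨m, ⟨hm.1, fun K' hK' hsub => Set.Subset.antisymm (hm.2 hK' hsub) hsub⟩, hsm⟩

lemma exists_maxPClique {V : Type} (G : SimpleGraph V) (P : Set V) {s : Set V}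
    (hsP : s ⊆ P) (hs : s.Pairwise G.Adj) :
    ∃ K, IsMaxPClique G P K ∧ s ⊆ K := by
  have hch : ∀ c ⊆ {K : Set V | K ⊆ P ∧ K.Pairwise G.Adj}, IsChain (· ⊆ ·) c → c.Nonempty →
      ∃ ub ∈ {K : Set V | K ⊆ P ∧ K.Pairwise G.Adj}, ∀ t ∈ c, t ⊆ ub := by
    rintro c hcS hchain _
    refine ⟨⋃₀ c, ⟨Set.sUnion_subset fun t ht => (hcS ht).1, ?_⟩,
      fun t ht => Set.subset_sUnion_of_mem ht⟩
    rintro x ⟨A, hA, hxA⟩ y ⟨B, hB, hyB⟩ hxy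
    rcases hchain.total hA hB with h | h
    · exact (hcS hB).2 (h hxA) hyB hxy
    · exact (hcS hA).2 hxA (h hyB) hxy
  obtain ⟨m, hsm, hm⟩ := zorn_subset_nonempty _ hch s ⟨hsP, hs⟩
  exact ⟨m, ⟨hm.1, fun K' h1 h2 hsub => Set.Subset.antisymm (hm.2 ⟨h1, h2⟩ hsub) hsub⟩, hsm⟩

/-- The bundled hypotheses on a consecutive-ones ordered clique matrix of `Gss G P`. -/
structure CM {V : Type} (G : SimpleGraph V) (P : Set V) {k : ℕ}
    (M : ↥((setNS G P)ᶜ) → Fin k → Prop) (f : Fin k → Set ↥((setNS G P)ᶜ)) : Prop where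
  finj : Function.Injective f
  fmax : ∀ j, IsMaxClique (Gss G P) (f j)
  fsurj : ∀ K, IsMaxClique (Gss G P) K → ∃ j, f j = K
  fmem : ∀ v j, M v j ↔ v ∈ f j
  cons : ∀ v, ConsecSet {j | M v j}
  indep : ∀ u v : V, u ∉ P → v ∉ P → ¬ G.Adj u v

namespace CM

variable {V : Type} {G : SimpleGraph V} {P : Set V} {k : ℕ}
  {M : ↥((setNS G P)ᶜ) → Fin k → Prop} {f : Fin k → Set ↥((setNS G P)ᶜ)}

lemma notNS_of_P {x : V} (hx : x ∈ P) : x ∈ (setNS G P)ᶜ := fun hmem => hmem.1 hx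

lemma adj_of_G {u v : ↥((setNS G P)ᶜ)} (h : G.Adj ↑u ↑v) : (Gss G P).Adj u v := by
  rw [Gss, SimpleGraph.fromRel_adj]
  exact ⟨fun he => h.ne (congrArg Subtype.val he), Or.inl (Or.inl h)⟩

lemma G_of_adj {u v : ↥((setNS G P)ᶜ)} (h : (Gss G P).Adj u v)
    (hp : (u : V) ∈ P ∨ (v : V) ∈ P) : G.Adj ↑u ↑v := by
  rw [Gss, SimpleGraph.fromRel_adj] at h
  rcases h.2 with h' | h'
  · rcases h' with h'' | ⟨hu, hv, _⟩
    · exact h''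
    · rcases hp with h3 | h3 <;> [exact absurd h3 hu; exact absurd h3 hv]
  · rcases h' with h'' | ⟨hv, hu, _⟩
    · exact h''.symm
    · rcases hp with h3 | h3 <;> [exact absurd h3 hu; exact absurd h3 hv]

variable (hS : CM G P M f)
include hS

lemma shared_col_adj {u v : ↥((setNS G P)ᶜ)} (hne : u ≠ v) {j : Fin k}
    (hu : M u j) (hv : M v j) : (Gss G P).Adj u v :=
  (SimpleGraph.isClique_iff _).mp (hS.fmax j).1 ((hS.fmem u j).1 hu) ((hS.fmem v j).1 hv) hne

lemma adj_shared_col {u v : ↥((setNS G P)ᶜ)} (h : (Gss G P).Adj u v) :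
    ∃ j, M u j ∧ M v j := by
  have hcl : (Gss G P).IsClique {u, v} := SimpleGraph.isClique_pair.mpr (fun _ => h)
  obtain ⟨K, hK, hsub⟩ := exists_maxClique _ hcl
  obtain ⟨j, rfl⟩ := hS.fsurj K hK
  exact ⟨j, (hS.fmem u j).2 (hsub (by simp)), (hS.fmem v j).2 (hsub (by simp))⟩

lemma row_nonempty (v : ↥((setNS G P)ᶜ)) : ∃ j, M v j := by
  obtain ⟨K, hK, hsub⟩ := exists_maxClique (Gss G P) (SimpleGraph.isClique_singleton v)
  obtain ⟨j, rfl⟩ := hS.fsurj K hK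
  exact ⟨j, (hS.fmem v j).2 (hsub rfl)⟩

lemma between {v : ↥((setNS G P)ᶜ)} {i j l : Fin k} (h1 : i ≤ j) (h2 : j ≤ l)
    (hi : M v i) (hl : M v l) : M v j :=
  hS.cons v i j l h1 h2 hi hl

lemma lt_of_gap {v : ↥((setNS G P)ᶜ)} {c d j : Fin k} (hc : M v c) (hd : ¬ M v d)
    (hcd : c ≤ d) (hj : M v j) : j < d := by
  by_contra h
  push_neg at h
  exact hd (hS.between hcd h hc hj)

lemma gt_of_gap {v : ↥((setNS G P)ᶜ)} {c d j : Fin k} (hc : M v c) (hd : ¬ M v d)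
    (hdc : d ≤ c) (hj : M v j) : d < j := by
  by_contra h
  push_neg at h
  exact hd (hS.between h hdc hj hc)

lemma diff_nonempty {c d : Fin k} (hcd : c ≠ d) : ∃ u, M u c ∧ ¬ M u d := by
  by_contra h
  push_neg at h
  have hsub : f c ⊆ f d := fun u hu => (hS.fmem u d).1 (h u ((hS.fmem u c).2 hu))
  exact hcd (hS.finj ((hS.fmax c).2 (f d) (hS.fmax d).1 hsub).symm)

end CM
end AuxStmt11
section AuxStmt11b

/-- The probe set of column `c` (as a set of vertices of `G`). -/
def KP {V : Type} (G : SimpleGraph V) (P : Set V) {k : ℕ}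
    (M : ↥((setNS G P)ᶜ) → Fin k → Prop) (c : Fin k) : Set V :=
  {x | x ∈ P ∧ ∃ h : x ∈ (setNS G P)ᶜ, M ⟨x, h⟩ c}

namespace CM

variable {V : Type} {G : SimpleGraph V} {P : Set V} {k : ℕ}
  {M : ↥((setNS G P)ᶜ) → Fin k → Prop} {f : Fin k → Set ↥((setNS G P)ᶜ)}

lemma mem_KP {p : ↥((setNS G P)ᶜ)} (hp : (p : V) ∈ P) {c : Fin k} (h : M p c) :
    (p : V) ∈ KP G P M c := by
  rcases p with ⟨pv, hpv⟩
  exact ⟨hp, hpv, h⟩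

variable (hS : CM G P M f)
include hS

lemma KP_pairwise (c : Fin k) : (KP G P M c).Pairwise G.Adj := by
  rintro x ⟨hxP, hx, hxc⟩ y ⟨hyP, hy, hyc⟩ hxy
  have hadj : (Gss G P).Adj ⟨x, hx⟩ ⟨y, hy⟩ :=
    hS.shared_col_adj (fun h => hxy (congrArg Subtype.val h)) hxc hyc
  exact G_of_adj hadj (Or.inl hxP)

lemma KP_subset (c : Fin k) : KP G P M c ⊆ P := fun _ hx => hx.1

lemma inter_nbhd {w z : ↥((setNS G P)ᶜ)} (hw : (w : V) ∉ P) (hz : (z : V) ∉ P)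
    {c1 c2 : Fin k} (hc : c1 ≤ c2)
    (hw1 : M w c1) (hwle : ∀ j, M w j → j ≤ c1)
    (hz2 : M z c2) (hzge : ∀ j, M z j → c2 ≤ j) :
    G.neighborSet ↑w ∩ G.neighborSet ↑z = KP G P M c1 ∩ KP G P M c2 := by
  ext x
  constructor
  · rintro ⟨hxw, hxz⟩
    have hxw : G.Adj ↑w x := hxw
    have hxz : G.Adj ↑z x := hxz
    have hxP : x ∈ P := by
      by_contra hxP
      exact hS.indep _ _ hw hxP hxw
    have hxns : x ∈ (setNS G P)ᶜ := notNS_of_P hxP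
    obtain ⟨j1, hwj1, hxj1⟩ := hS.adj_shared_col (adj_of_G (u := w) (v := ⟨x, hxns⟩) hxw)
    obtain ⟨j2, hzj2, hxj2⟩ := hS.adj_shared_col (adj_of_G (u := z) (v := ⟨x, hxns⟩) hxz)
    have h1 : j1 ≤ c1 := hwle j1 hwj1
    have h2 : c2 ≤ j2 := hzge j2 hzj2
    exact ⟨⟨hxP, hxns, hS.between h1 (le_trans hc h2) hxj1 hxj2⟩,
      ⟨hxP, hxns, hS.between (le_trans h1 hc) h2 hxj1 hxj2⟩⟩
  · rintro ⟨⟨hxP, hx, hx1⟩, ⟨-, hx2', hx2⟩⟩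
    have hx2 : M ⟨x, hx⟩ c2 := hx2
    have hne1 : w ≠ (⟨x, hx⟩ : ↥((setNS G P)ᶜ)) := fun h => hw (by rw [h]; exact hxP)
    have hne2 : z ≠ (⟨x, hx⟩ : ↥((setNS G P)ᶜ)) := fun h => hz (by rw [h]; exact hxP)
    exact ⟨G_of_adj (hS.shared_col_adj hne1 hw1 hx1) (Or.inr hxP),
      G_of_adj (hS.shared_col_adj hne2 hz2 hx2) (Or.inr hxP)⟩

omit hS

lemma adj_of_maxPClique {w z : ↥((setNS G P)ᶜ)} (hw : (w : V) ∉ P) (hz : (z : V) ∉ P)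
    (hne : (w : V) ≠ (z : V)) {K : Set V} (hK : IsMaxPClique G P K)
    (hNN : G.neighborSet ↑w ∩ G.neighborSet ↑z = K) : (Gss G P).Adj w z := by
  rw [Gss, SimpleGraph.fromRel_adj]
  exact ⟨fun h => hne (congrArg Subtype.val h), Or.inl (Or.inr ⟨hw, hz, Or.inl ⟨K, hK, hNN⟩⟩)⟩

lemma epp_of_adj (hindep : ∀ u v : V, u ∉ P → v ∉ P → ¬ G.Adj u v)
    {w z : ↥((setNS G P)ᶜ)} (hadj : (Gss G P).Adj w z)
    (hw : (w : V) ∉ P) (hz : (z : V) ∉ P) :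
    (∃ K, IsMaxPClique G P K ∧ G.neighborSet ↑w ∩ G.neighborSet ↑z = K) ∨
    (∃ a b : V, a ∈ G.neighborSet ↑w ∩ G.neighborSet ↑z ∧
      b ∈ G.neighborSet ↑w ∩ G.neighborSet ↑z ∧ a ≠ b ∧ ¬ G.Adj a b) := by
  rw [Gss, SimpleGraph.fromRel_adj] at hadj
  rcases hadj.2 with h | h
  · rcases h with hG | ⟨-, -, h⟩
    · exact absurd hG (hindep _ _ hw hz)
    · exact h
  · rcases h with hG | ⟨-, -, h⟩
    · exact absurd hG (hindep _ _ hz hw)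
    · rcases h with ⟨K, hK, hNN⟩ | ⟨a, b, ha, hb, hab, hnadj⟩
      · exact Or.inl ⟨K, hK, by rw [Set.inter_comm]; exact hNN⟩
      · exact Or.inr ⟨a, b, ⟨ha.2, ha.1⟩, ⟨hb.2, hb.1⟩, hab, hnadj⟩

lemma maxP_of_adj (hindep : ∀ u v : V, u ∉ P → v ∉ P → ¬ G.Adj u v)
    {w z : ↥((setNS G P)ᶜ)} (hadj : (Gss G P).Adj w z)
    (hw : (w : V) ∉ P) (hz : (z : V) ∉ P)
    (hpair : (G.neighborSet ↑w ∩ G.neighborSet ↑z).Pairwise G.Adj) :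
    IsMaxPClique G P (G.neighborSet ↑w ∩ G.neighborSet ↑z) := by
  rcases epp_of_adj hindep hadj hw hz with ⟨K, hK, hNN⟩ | ⟨a, b, ha, hb, hab, hn⟩
  · rw [hNN]; exact hK
  · exact absurd (hpair ha hb hab) hn

include hS

lemma not_maxP_of_no_col {w z : ↥((setNS G P)ᶜ)} (hw : (w : V) ∉ P) (hz : (z : V) ∉ P)
    (hne : w ≠ z) (hnocol : ∀ j, ¬ (M w j ∧ M z j)) :
    ¬ IsMaxPClique G P (G.neighborSet ↑w ∩ G.neighborSet ↑z) := by
  intro hmax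
  obtain ⟨j, h1, h2⟩ := hS.adj_shared_col
    (adj_of_maxPClique hw hz (fun h => hne (Subtype.ext h)) hmax rfl)
  exact hnocol j ⟨h1, h2⟩

lemma not_single_col {y : ↥((setNS G P)ᶜ)} (hy : (y : V) ∉ P) {c : Fin k}
    (hall : ∀ j, M y j → j = c) : False := by
  apply y.2
  refine ⟨hy, ?_⟩
  rw [SimpleGraph.isClique_iff]
  have key : ∀ x, G.Adj ↑y x → x ∈ KP G P M c := by
    intro x hx
    have hxP : x ∈ P := by
      by_contra h
      exact hS.indep _ _ hy h hx
    have hxns : x ∈ (setNS G P)ᶜ := notNS_of_P hxP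
    obtain ⟨j, h1, h2⟩ := hS.adj_shared_col (adj_of_G (u := y) (v := ⟨x, hxns⟩) hx)
    exact ⟨hxP, hxns, (hall j h1) ▸ h2⟩
  intro a ha b hb hab
  exact hS.KP_pairwise c (key a ha) (key b hb) hab

end CM
end AuxStmt11b
section AuxStmt11c

/-- The column-reversed matrix. -/
def revM {V : Type} {G : SimpleGraph V} {P : Set V} {k : ℕ}
    (M : ↥((setNS G P)ᶜ) → Fin k → Prop) : ↥((setNS G P)ᶜ) → Fin k → Prop :=
  fun v j => M v j.rev

namespace CM

variable {V : Type} {G : SimpleGraph V} {P : Set V} {k : ℕ}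
  {M : ↥((setNS G P)ᶜ) → Fin k → Prop} {f : Fin k → Set ↥((setNS G P)ᶜ)}

lemma KP_rev (c : Fin k) : KP G P (revM M) c = KP G P M c.rev := rfl

variable (hS : CM G P M f)
include hS

lemma rev : CM G P (revM M) (fun j => f j.rev) where
  finj := fun a b h => by
    have h2 := hS.finj h
    rw [← Fin.rev_rev a, ← Fin.rev_rev b, h2]
  fmax := fun j => hS.fmax j.rev
  fsurj := fun K hK => by
    obtain ⟨j, hj⟩ := hS.fsurj K hK
    exact ⟨j.rev, by rw [Fin.rev_rev]; exact hj⟩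
  fmem := fun v j => hS.fmem v j.rev
  cons := fun v i j l h1 h2 hi hl =>
    hS.cons v l.rev j.rev i.rev (Fin.rev_le_rev.mpr h2) (Fin.rev_le_rev.mpr h1) hl hi
  indep := hS.indep

lemma core_left {v : ↥((setNS G P)ᶜ)} (hv : (v : V) ∉ P) {c c' : Fin k}
    (hsucc : (c' : ℕ) = (c : ℕ) + 1)
    (hvc : M v c) (hvc' : M v c') (hvge : ∀ j, M v j → c ≤ j) :
    ∃ p : ↥((setNS G P)ᶜ), (p : V) ∈ P ∧ M p c ∧ ¬ M p c' := by
  by_contra hno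
  push_neg at hno
  have hcc' : c ≤ c' := by rw [Fin.le_def]; omega
  have hcne : c ≠ c' := by
    intro h
    rw [h] at hsucc
    omega
  obtain ⟨u, huc, huc'⟩ := hS.diff_nonempty hcne
  have huP : (u : V) ∉ P := fun h => huc' (hno u h huc)
  have hule : ∀ j, M u j → j ≤ c := by
    intro j hj
    have h1 := hS.lt_of_gap huc huc' hcc' hj
    rw [Fin.lt_def] at h1
    rw [Fin.le_def]
    omega
  have hune : u ≠ v := fun h => huc' (h ▸ hvc')
  have hNN := hS.inter_nbhd huP hv (le_refl c) huc hule hvc hvge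
  rw [Set.inter_self] at hNN
  have hadj : (Gss G P).Adj u v := hS.shared_col_adj hune huc hvc
  have hKmax : IsMaxPClique G P (KP G P M c) := by
    have h2 := maxP_of_adj hS.indep hadj huP hv (by rw [hNN]; exact hS.KP_pairwise c)
    rwa [hNN] at h2
  have hKc' : KP G P M c' = KP G P M c := by
    refine hKmax.2 _ (hS.KP_subset c') (hS.KP_pairwise c') ?_
    rintro x ⟨hxP, hx, hxc⟩
    exact ⟨hxP, hx, hno ⟨x, hx⟩ hxP hxc⟩
  have hcross : ∀ w z : ↥((setNS G P)ᶜ), M w c → ¬ M w c' → M z c' → ¬ M z c →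
      (Gss G P).Adj w z := by
    intro w z hwc hwc' hzc' hzc
    have hwP : (w : V) ∉ P := fun h => hwc' (hno w h hwc)
    have hzP : (z : V) ∉ P := by
      intro h
      have hz2 : (z : V) ∈ KP G P M c := by rw [← hKc']; exact mem_KP h hzc'
      obtain ⟨-, hh, hmc⟩ := hz2
      exact hzc (by rwa [show (⟨(z : V), hh⟩ : ↥((setNS G P)ᶜ)) = z from Subtype.ext rfl] at hmc)
    have hwle : ∀ j, M w j → j ≤ c := fun j hj => by
      have h1 := hS.lt_of_gap hwc hwc' hcc' hj
      rw [Fin.lt_def] at h1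
      rw [Fin.le_def]
      omega
    have hzge : ∀ j, M z j → c' ≤ j := fun j hj => by
      have h1 := hS.gt_of_gap hzc' hzc hcc' hj
      rw [Fin.lt_def] at h1
      rw [Fin.le_def]
      omega
    have hwz : w ≠ z := fun h => hzc (h ▸ hwc)
    have hNN2 := hS.inter_nbhd hwP hzP hcc' hwc hwle hzc' hzge
    have hNN3 : G.neighborSet ↑w ∩ G.neighborSet ↑z = KP G P M c := by
      rw [hNN2, hKc', Set.inter_self]
    exact adj_of_maxPClique hwP hzP (fun h => hwz (Subtype.ext h)) hKmax hNN3
  have hclique : (Gss G P).IsClique (f c ∪ f c') := by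
    rw [SimpleGraph.isClique_iff]
    intro a ha b hb hab
    rcases ha with ha | ha <;> rcases hb with hb | hb
    · exact (SimpleGraph.isClique_iff _).mp (hS.fmax c).1 ha hb hab
    · by_cases hac' : a ∈ f c'
      · exact (SimpleGraph.isClique_iff _).mp (hS.fmax c').1 hac' hb hab
      · by_cases hbc : b ∈ f c
        · exact (SimpleGraph.isClique_iff _).mp (hS.fmax c).1 ha hbc hab
        · exact hcross a b ((hS.fmem a c).2 ha) (fun h => hac' ((hS.fmem a c').1 h))
            ((hS.fmem b c').2 hb) (fun h => hbc ((hS.fmem b c).1 h))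
    · by_cases hbc' : b ∈ f c'
      · exact (SimpleGraph.isClique_iff _).mp (hS.fmax c').1 ha hbc' hab
      · by_cases hac : a ∈ f c
        · exact (SimpleGraph.isClique_iff _).mp (hS.fmax c).1 hac hb hab
        · exact (hcross b a ((hS.fmem b c).2 hb) (fun h => hbc' ((hS.fmem b c').1 h))
            ((hS.fmem a c').2 ha) (fun h => hac ((hS.fmem a c).1 h))).symm
    · exact (SimpleGraph.isClique_iff _).mp (hS.fmax c').1 ha hb hab
  have huni : f c ∪ f c' = f c := (hS.fmax c).2 _ hclique Set.subset_union_left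
  obtain ⟨z, hzc', hzc⟩ := hS.diff_nonempty (Ne.symm hcne)
  have hzmem : z ∈ f c := by
    rw [← huni]
    exact Set.mem_union_right _ ((hS.fmem z c').1 hzc')
  exact hzc ((hS.fmem z c).2 hzmem)

lemma core_right {v : ↥((setNS G P)ᶜ)} (hv : (v : V) ∉ P) {c c' : Fin k}
    (hsucc : (c : ℕ) = (c' : ℕ) + 1)
    (hvc : M v c) (hvc' : M v c') (hvle : ∀ j, M v j → j ≤ c) :
    ∃ p : ↥((setNS G P)ᶜ), (p : V) ∈ P ∧ M p c ∧ ¬ M p c' := by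
  have hsucc' : ((c'.rev : Fin k) : ℕ) = ((c.rev : Fin k) : ℕ) + 1 := by
    rw [Fin.val_rev, Fin.val_rev]
    have := c.isLt
    have := c'.isLt
    omega
  have h1 : revM M v c.rev := by
    show M v c.rev.rev
    rw [Fin.rev_rev]
    exact hvc
  have h2 : revM M v c'.rev := by
    show M v c'.rev.rev
    rw [Fin.rev_rev]
    exact hvc'
  have h3 : ∀ j, revM M v j → c.rev ≤ j := by
    intro j hj
    have h4 : j.rev ≤ c := hvle j.rev hj
    rw [← Fin.rev_rev j]
    exact Fin.rev_le_rev.mpr h4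
  obtain ⟨p, hpP, hp1, hp2⟩ := hS.rev.core_left hv hsucc' h1 h2 h3
  refine ⟨p, hpP, ?_, ?_⟩
  · have h5 : M p c.rev.rev := hp1
    rwa [Fin.rev_rev] at h5
  · intro h
    exact hp2 (show M p c'.rev.rev by rwa [Fin.rev_rev])

lemma no_merge_aux {i i' j : Fin k} (hsucc : (i' : ℕ) = (i : ℕ) + 1)
    (hno : ∀ p : ↥((setNS G P)ᶜ), (p : V) ∈ P → (M p i ↔ M p i'))
    (hj : (j : ℕ) < (i : ℕ))
    (hKj : ∀ x ∈ KP G P M i, ∃ hx : x ∈ (setNS G P)ᶜ, M ⟨x, hx⟩ j)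
    (hnotmax : ¬ IsMaxPClique G P (KP G P M i)) : False := by
  have hii' : i ≤ i' := by rw [Fin.le_def]; omega
  have hine : i ≠ i' := by
    intro h
    rw [h] at hsucc
    omega
  obtain ⟨w, hwi, hwi'⟩ := hS.diff_nonempty hine
  have hwP : (w : V) ∉ P := fun h => hwi' ((hno w h).1 hwi)
  have hwle : ∀ jj, M w jj → jj ≤ i := fun jj hjj => by
    have h1 := hS.lt_of_gap hwi hwi' hii' hjj
    rw [Fin.lt_def] at h1
    rw [Fin.le_def]
    omega
  have hi1 : 1 ≤ (i : ℕ) := by omega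
  set i₀ : Fin k := ⟨(i : ℕ) - 1, by have := i.isLt; omega⟩ with hi₀
  have hi₀v : (i₀ : ℕ) = (i : ℕ) - 1 := rfl
  have hii₀ : i ≠ i₀ := by
    intro h
    have h2 := congrArg Fin.val h
    rw [hi₀v] at h2
    omega
  have hi₀le : i₀ ≤ i := by rw [Fin.le_def, hi₀v]; omega
  obtain ⟨y, hyi, hyi₀⟩ := hS.diff_nonempty hii₀
  have hyP : (y : V) ∉ P := by
    intro h
    have hy : (y : V) ∈ KP G P M i := mem_KP h hyi
    obtain ⟨hyns, hyj⟩ := hKj _ hy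
    have hyj' : M y j := by
      rwa [show (⟨(y : V), hyns⟩ : ↥((setNS G P)ᶜ)) = y from Subtype.ext rfl] at hyj
    exact hyi₀ (hS.between (show j ≤ i₀ by rw [Fin.le_def, hi₀v]; omega) hi₀le hyj' hyi)
  have hyge : ∀ jj, M y jj → i ≤ jj := fun jj hjj => by
    have h1 := hS.gt_of_gap hyi hyi₀ hi₀le hjj
    rw [Fin.lt_def, hi₀v] at h1
    rw [Fin.le_def]
    omega
  have hyi' : M y i' := by
    by_contra h
    refine hS.not_single_col hyP (c := i) (fun jj hjj => ?_)
    have h1 := hS.lt_of_gap hyi h hii' hjj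
    have h2 := hyge jj hjj
    rw [Fin.lt_def] at h1
    rw [Fin.le_def] at h2
    exact Fin.ext (by omega)
  have hywne : w ≠ y := fun h => hwi' (h ▸ hyi')
  have hNN2 := hS.inter_nbhd hwP hyP (le_refl i) hwi hwle hyi hyge
  rw [Set.inter_self] at hNN2
  have hadj : (Gss G P).Adj w y := hS.shared_col_adj hywne hwi hyi
  have hmax := maxP_of_adj hS.indep hadj hwP hyP (by rw [hNN2]; exact hS.KP_pairwise i)
  rw [hNN2] at hmax
  exact hnotmax hmax

lemma no_merge {i i' : Fin k} (hsucc : (i' : ℕ) = (i : ℕ) + 1) :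
    ∃ p : ↥((setNS G P)ᶜ), (p : V) ∈ P ∧ ¬ (M p i ↔ M p i') := by
  by_contra hno
  push_neg at hno
  have hii' : i ≤ i' := by rw [Fin.le_def]; omega
  have hine : i ≠ i' := by
    intro h
    rw [h] at hsucc
    omega
  obtain ⟨w, hwi, hwi'⟩ := hS.diff_nonempty hine
  obtain ⟨z, hzi', hzi⟩ := hS.diff_nonempty (Ne.symm hine)
  have hwP : (w : V) ∉ P := fun h => hwi' ((hno w h).1 hwi)
  have hzP : (z : V) ∉ P := fun h => hzi ((hno z h).2 hzi')
  have hwle : ∀ jj, M w jj → jj ≤ i := fun jj hjj => by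
    have h1 := hS.lt_of_gap hwi hwi' hii' hjj
    rw [Fin.lt_def] at h1
    rw [Fin.le_def]
    omega
  have hzge : ∀ jj, M z jj → i' ≤ jj := fun jj hjj => by
    have h1 := hS.gt_of_gap hzi' hzi hii' hjj
    rw [Fin.lt_def] at h1
    rw [Fin.le_def]
    omega
  have hKii' : KP G P M i = KP G P M i' := by
    ext x
    constructor <;> rintro ⟨hxP, hx, hxc⟩
    · exact ⟨hxP, hx, (hno ⟨x, hx⟩ hxP).1 hxc⟩
    · exact ⟨hxP, hx, (hno ⟨x, hx⟩ hxP).2 hxc⟩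
  have hwzne : w ≠ z := fun h => hzi (h ▸ hwi)
  have hNN := hS.inter_nbhd hwP hzP hii' hwi hwle hzi' hzge
  have hNNi : G.neighborSet ↑w ∩ G.neighborSet ↑z = KP G P M i := by
    rw [hNN, ← hKii', Set.inter_self]
  have hnotmax : ¬ IsMaxPClique G P (KP G P M i) := by
    intro h
    refine hS.not_maxP_of_no_col hwP hzP hwzne (fun jj hjj => ?_) (by rw [hNNi]; exact h)
    have h1 := hwle jj hjj.1
    have h2 := hzge jj hjj.2
    rw [Fin.le_def] at h1 h2
    omega
  obtain ⟨Kp, hKpmax, hKpsub⟩ := exists_maxPClique G P (hS.KP_subset i) (hS.KP_pairwise i)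
  have hKne : KP G P M i ≠ Kp := fun h => hnotmax (h ▸ hKpmax)
  obtain ⟨q, hqK, hqKP⟩ : ∃ q, q ∈ Kp ∧ q ∉ KP G P M i := by
    by_contra h
    push_neg at h
    exact hKne (Set.Subset.antisymm hKpsub h)
  have hqP : q ∈ P := hKpmax.1.1 hqK
  have hclK : (Gss G P).IsClique {x : ↥((setNS G P)ᶜ) | (x : V) ∈ Kp} := by
    rw [SimpleGraph.isClique_iff]
    intro a ha b hb hab
    exact adj_of_G (hKpmax.1.2 ha hb (fun h => hab (Subtype.ext h)))
  obtain ⟨Q, hQ, hsubQ⟩ := exists_maxClique _ hclK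
  obtain ⟨jc, rfl⟩ := hS.fsurj Q hQ
  have hqns : q ∈ (setNS G P)ᶜ := notNS_of_P hqP
  have hqj : M ⟨q, hqns⟩ jc := (hS.fmem _ _).2 (hsubQ hqK)
  have hqi : ¬ M ⟨q, hqns⟩ i := fun h => hqKP ⟨hqP, hqns, h⟩
  have hqi' : ¬ M ⟨q, hqns⟩ i' := fun h => hqKP (by rw [hKii']; exact ⟨hqP, hqns, h⟩)
  have hKj : ∀ x ∈ KP G P M i, ∃ hx : x ∈ (setNS G P)ᶜ, M ⟨x, hx⟩ jc := by
    intro x hx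
    exact ⟨hx.2.1, (hS.fmem _ _).2 (hsubQ (hKpsub hx))⟩
  have hjne : (jc : ℕ) < (i : ℕ) ∨ (i' : ℕ) < (jc : ℕ) := by
    have h1 : (jc : ℕ) ≠ (i : ℕ) := fun h => hqi ((Fin.ext h) ▸ hqj)
    have h2 : (jc : ℕ) ≠ (i' : ℕ) := fun h => hqi' ((Fin.ext h) ▸ hqj)
    omega
  rcases hjne with hcase | hcase
  · exact hS.no_merge_aux hsucc hno hcase hKj hnotmax
  · have hsucc' : ((i.rev : Fin k) : ℕ) = ((i'.rev : Fin k) : ℕ) + 1 := by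
      rw [Fin.val_rev, Fin.val_rev]
      have := i'.isLt
      omega
    have hno' : ∀ p : ↥((setNS G P)ᶜ), (p : V) ∈ P → (revM M p i'.rev ↔ revM M p i.rev) := by
      intro p hp
      show M p i'.rev.rev ↔ M p i.rev.rev
      rw [Fin.rev_rev, Fin.rev_rev]
      exact (hno p hp).symm
    have hKrev : KP G P (revM M) i'.rev = KP G P M i := by
      rw [KP_rev, Fin.rev_rev, ← hKii']
    have hjlt : ((jc.rev : Fin k) : ℕ) < ((i'.rev : Fin k) : ℕ) := by
      rw [Fin.val_rev, Fin.val_rev]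
      have := jc.isLt
      have := i'.isLt
      omega
    have hKj' : ∀ x ∈ KP G P (revM M) i'.rev, ∃ hx : x ∈ (setNS G P)ᶜ, revM M ⟨x, hx⟩ jc.rev := by
      intro x hx
      have hx' : x ∈ KP G P M i := by rwa [hKrev] at hx
      obtain ⟨hxns, hm⟩ := hKj x hx'
      exact ⟨hxns, show M _ jc.rev.rev by rwa [Fin.rev_rev]⟩
    have hnotmax' : ¬ IsMaxPClique G P (KP G P (revM M) i'.rev) := by
      rw [hKrev]
      exact hnotmax
    exact hS.rev.no_merge_aux hsucc' hno' hjlt hKj' hnotmax'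

end CM
end AuxStmt11c
section AuxStmt11d

lemma mergeCols_at {V : Type} {k : ℕ} (M : V → Fin k → Prop) (i : ℕ) (h : i + 1 < k)
    (x : V) (j : Fin (k - 1)) (hj : (j : ℕ) = i) :
    mergeCols M i x j ↔ (M x ⟨i, by omega⟩ ∨ M x ⟨i + 1, h⟩) := by
  unfold mergeCols
  rw [dif_neg (by omega : ¬ ((j : ℕ) < i)), dif_pos hj]

end AuxStmt11d
/-- Let `G` be a connected probe interval graph. Every consecutive-ones
ordered clique matrix of `G**`, interpreted as a probe interval model with probes `P`
and non-probes `N \ N_S`, is a normal probe interval model of `G - N_S`. -/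
theorem stmt11 {V : Type} (G : SimpleGraph V) (P : Set V)
    (hIndep : ∀ u v : V, u ∉ P → v ∉ P → ¬ G.Adj u v)
    (hConn : G.Connected) (hPIG : IsPIGraph G P)
    {k : ℕ} (M : ↥((setNS G P)ᶜ) → Fin k → Prop)
    (hM : IsC1CliqueMatrix (Gss G P) M) :
    IsNormalModel (G.induce ((setNS G P)ᶜ)) (probesPS G P) M := by
  clear hConn hPIG
  obtain ⟨⟨f, finj, fmax, fsurj, fmem⟩, hcons⟩ := hM
  have hS : CM G P M f := ⟨finj, fmax, fsurj, fmem, hcons, hIndep⟩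
  refine ⟨⟨fun v => ⟨hS.row_nonempty v, hS.cons v⟩, ?_⟩, ?_, ?_⟩
  · -- Represents
    intro u v huv
    constructor
    · intro hadj
      have hG : G.Adj ↑u ↑v := by simpa using hadj
      have hp : (u : V) ∈ P ∨ (v : V) ∈ P := by
        by_contra h
        push_neg at h
        exact hIndep _ _ h.1 h.2 hG
      obtain ⟨j, h1, h2⟩ := hS.adj_shared_col (CM.adj_of_G hG)
      exact ⟨hp, j, h1, h2⟩
    · rintro ⟨hp, j, h1, h2⟩
      have hadj := hS.shared_col_adj huv h1 h2
      have hG := CM.G_of_adj hadj hp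
      simpa using hG
  · -- Taut
    intro v M' hcontr heq
    obtain ⟨c, hend, hM'⟩ := hcontr
    rcases hend with ⟨⟨hvc, hge⟩, j, hvj, hjne⟩ | ⟨⟨hvc, hle⟩, j, hvj, hjne⟩
    · -- proper left endpoint
      have hcj : c < j := lt_of_le_of_ne (hge j hvj) (Ne.symm hjne)
      rw [Fin.lt_def] at hcj
      have hck : (c : ℕ) + 1 < k := by
        have := j.isLt
        omega
      set c' : Fin k := ⟨(c : ℕ) + 1, hck⟩ with hc'
      have hc'v : (c' : ℕ) = (c : ℕ) + 1 := rfl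
      have hvc' : M v c' := hS.between (show c ≤ c' by rw [Fin.le_def, hc'v]; omega)
        (show c' ≤ j by rw [Fin.le_def, hc'v]; omega) hvc hvj
      obtain ⟨u, hpu, huc, huc'⟩ :
          ∃ u : ↥((setNS G P)ᶜ), ((v : V) ∈ P ∨ (u : V) ∈ P) ∧ M u c ∧ ¬ M u c' := by
        by_cases hvP : (v : V) ∈ P
        · obtain ⟨u, huc, huc'⟩ := hS.diff_nonempty
            (show c ≠ c' by intro h; have h2 := congrArg Fin.val h; rw [hc'v] at h2; omega)
          exact ⟨u, Or.inl hvP, huc, huc'⟩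
        · obtain ⟨p, hpP, h1, h2⟩ := hS.core_left hvP hc'v hvc hvc' hge
          exact ⟨p, Or.inr hpP, h1, h2⟩
      have hvu : v ≠ u := fun h => huc' (h ▸ hvc')
      have hrep : RepAdj (probesPS G P) M v u := ⟨hvu, hpu, c, hvc, huc⟩
      have hrep' : ¬ RepAdj (probesPS G P) M' v u := by
        rintro ⟨-, -, jj, hvjj, hujj⟩
        have h1 := (hM' v jj).1 hvjj
        have h2 : M u jj := ((hM' u jj).1 hujj).1
        have h3 : jj ≠ c := fun h => h1.2 ⟨rfl, h⟩
        have h4 := hge jj h1.1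
        have h5 := hS.lt_of_gap huc huc'
          (show c ≤ c' by rw [Fin.le_def, hc'v]; omega) h2
        rw [Fin.le_def] at h4
        rw [Fin.lt_def, hc'v] at h5
        exact h3 (Fin.ext (by omega))
      rw [heq] at hrep'
      exact hrep' hrep
    · -- proper right endpoint
      have hcj : j < c := lt_of_le_of_ne (hle j hvj) hjne
      rw [Fin.lt_def] at hcj
      set c' : Fin k := ⟨(c : ℕ) - 1, by have := c.isLt; omega⟩ with hc'
      have hc'v : (c' : ℕ) = (c : ℕ) - 1 := rfl
      have hvc' : M v c' := hS.between (show j ≤ c' by rw [Fin.le_def, hc'v]; omega)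
        (show c' ≤ c by rw [Fin.le_def, hc'v]; omega) hvj hvc
      have hcsucc : (c : ℕ) = (c' : ℕ) + 1 := by rw [hc'v]; omega
      obtain ⟨u, hpu, huc, huc'⟩ :
          ∃ u : ↥((setNS G P)ᶜ), ((v : V) ∈ P ∨ (u : V) ∈ P) ∧ M u c ∧ ¬ M u c' := by
        by_cases hvP : (v : V) ∈ P
        · obtain ⟨u, huc, huc'⟩ := hS.diff_nonempty
            (show c ≠ c' by intro h; have h2 := congrArg Fin.val h; rw [hc'v] at h2; omega)
          exact ⟨u, Or.inl hvP, huc, huc'⟩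
        · obtain ⟨p, hpP, h1, h2⟩ := hS.core_right hvP hcsucc hvc hvc' hle
          exact ⟨p, Or.inr hpP, h1, h2⟩
      have hvu : v ≠ u := fun h => huc' (h ▸ hvc')
      have hrep : RepAdj (probesPS G P) M v u := ⟨hvu, hpu, c, hvc, huc⟩
      have hrep' : ¬ RepAdj (probesPS G P) M' v u := by
        rintro ⟨-, -, jj, hvjj, hujj⟩
        have h1 := (hM' v jj).1 hvjj
        have h2 : M u jj := ((hM' u jj).1 hujj).1
        have h3 : jj ≠ c := fun h => h1.2 ⟨rfl, h⟩
        have h4 := hle jj h1.1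
        have h5 := hS.gt_of_gap huc huc'
          (show c' ≤ c by rw [Fin.le_def, hc'v]; omega) h2
        rw [Fin.le_def] at h4
        rw [Fin.lt_def, hc'v] at h5
        exact h3 (Fin.ext (by omega))
      rw [heq] at hrep'
      exact hrep' hrep
  · -- MinimalModel
    rintro i ⟨hik, hmodel⟩
    have hik' : i < k := by omega
    set iF : Fin k := ⟨i, hik'⟩ with hiF
    set i'F : Fin k := ⟨i + 1, hik⟩ with hi'F
    have hiv : (iF : ℕ) = i := rfl
    have hi'v : (i'F : ℕ) = i + 1 := rfl
    obtain ⟨p, hpP, hiff⟩ := hS.no_merge (i := iF) (i' := i'F) rfl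
    have hkm : i < k - 1 := by omega
    set jm : Fin (k - 1) := ⟨i, hkm⟩ with hjm
    have hmrg : ∀ x : ↥((setNS G P)ᶜ), (M x iF ∨ M x i'F) → mergeCols M i x jm :=
      fun x hx => (mergeCols_at M i hik x jm rfl).2 hx
    rcases Classical.em (M p iF) with hpi | hpi
    · have hpi' : ¬ M p i'F := fun h => hiff ⟨fun _ => h, fun _ => hpi⟩
      obtain ⟨z, hzi', hzi⟩ := hS.diff_nonempty
        (show i'F ≠ iF by intro h; have h2 := congrArg Fin.val h; rw [hiv, hi'v] at h2; omega)
      have hne : p ≠ z := fun h => hzi (h ▸ hpi)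
      have hAdj : (G.induce ((setNS G P)ᶜ)).Adj p z :=
        (hmodel.2 p z hne).2 ⟨Or.inl hpP, jm, hmrg p (Or.inl hpi), hmrg z (Or.inr hzi')⟩
      have hG : G.Adj ↑p ↑z := by simpa using hAdj
      obtain ⟨jj, h1, h2⟩ := hS.adj_shared_col (CM.adj_of_G hG)
      have ha := hS.lt_of_gap hpi hpi' (show iF ≤ i'F by rw [Fin.le_def, hiv, hi'v]; omega) h1
      have hb := hS.gt_of_gap hzi' hzi (show iF ≤ i'F by rw [Fin.le_def, hiv, hi'v]; omega) h2
      rw [Fin.lt_def, hi'v] at ha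
      rw [Fin.lt_def, hiv] at hb
      omega
    · have hpi' : M p i'F := by
        by_contra h
        exact hiff ⟨fun hh => absurd hh hpi, fun hh => absurd hh h⟩
      obtain ⟨z, hzi, hzi'⟩ := hS.diff_nonempty
        (show iF ≠ i'F by intro h; have h2 := congrArg Fin.val h; rw [hiv, hi'v] at h2; omega)
      have hne : p ≠ z := fun h => hzi' (h ▸ hpi')
      have hAdj : (G.induce ((setNS G P)ᶜ)).Adj p z :=
        (hmodel.2 p z hne).2 ⟨Or.inl hpP, jm, hmrg p (Or.inr hpi'), hmrg z (Or.inl hzi)⟩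
      have hG : G.Adj ↑p ↑z := by simpa using hAdj
      obtain ⟨jj, h1, h2⟩ := hS.adj_shared_col (CM.adj_of_G hG)
      have ha := hS.gt_of_gap hpi' hpi (show iF ≤ i'F by rw [Fin.le_def, hiv, hi'v]; omega) h1
      have hb := hS.lt_of_gap hzi hzi' (show iF ≤ i'F by rw [Fin.le_def, hiv, hi'v]; omega) h2
      rw [Fin.lt_def, hiv] at ha
      rw [Fin.lt_def, hi'v] at hb
      omega
end

section
/- Let G be a connected probe interval graph and let (c, d₁, d₂, …, d_k, c') be consecutive columns, in left-to-right order, of a normal probe interval model of G − N_S, where c and c' are clique columns and each d_i is a semi-clique column. Then there is an index h with 0 ≤ h ≤ k such that the probe sets of d₁, …, d_h are subsets of the probe set of c, the probe sets of d_{h+1}, …, d_k are subsets of the probe set of c', the sequence of probe sets of c, d₁, …, d_h is strictly decreasing under inclusion, and the sequence of probe sets of d_{h+1}, …, d_k, c' is strictly increasing under inclusion. -/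
open Set

section Aux15

variable {W : Type} {K : ℕ}

private lemma le_mk {n : ℕ} (a : Fin n) (b : ℕ) (hb : b < n) (h : a.val ≤ b) :
    a ≤ (⟨b, hb⟩ : Fin n) := Fin.le_def.mpr h

private lemma mk_le {n : ℕ} (a : ℕ) (ha : a < n) (b : Fin n) (h : a ≤ b.val) :
    (⟨a, ha⟩ : Fin n) ≤ b := Fin.le_def.mpr h

private lemma mk_le_mk' {n : ℕ} (a b : ℕ) (ha : a < n) (hb : b < n) (h : a ≤ b) :
    (⟨a, ha⟩ : Fin n) ≤ (⟨b, hb⟩ : Fin n) := Fin.le_def.mpr h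

private lemma exists_leftEnd (M : W → Fin K → Prop) (hR : RowsOK M) (v : W) :
    ∃ c, IsLeftEnd M v c := by
  obtain ⟨c, hc, hmin⟩ := Set.exists_min_image {j | M v j} id (Set.toFinite _) (hR v).1
  exact ⟨c, hc, fun j hj => hmin j hj⟩

private lemma exists_rightEnd (M : W → Fin K → Prop) (hR : RowsOK M) (v : W) :
    ∃ c, IsRightEnd M v c := by
  obtain ⟨c, hc, hmax⟩ := Set.exists_max_image {j | M v j} id (Set.toFinite _) (hR v).1
  exact ⟨c, hc, fun j hj => hmax j hj⟩

private lemma consecM (M : W → Fin K → Prop) (hR : RowsOK M) (v : W) {a b c : Fin K}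
    (h1 : a ≤ b) (h2 : b ≤ c) (ha : M v a) (hc : M v c) : M v b :=
  (hR v).2 a b c h1 h2 ha hc

private lemma mem_merge_le (M : W → Fin K → Prop) (j : ℕ) (hj : j + 1 < K) (v : W)
    (m : Fin K) (hm : M v m) (hle : m.val ≤ j) :
    mergeCols M j v ⟨m.val, by omega⟩ := by
  unfold mergeCols
  by_cases h1 : m.val < j
  · rw [dif_pos h1]; exact hm
  · have hmj : m.val = j := by omega
    rw [dif_neg (by omega : ¬ m.val < j), dif_pos hmj]
    left
    have he : (⟨j, by omega⟩ : Fin K) = m := Fin.ext hmj.symm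
    rw [he]; exact hm

private lemma mem_merge_gt (M : W → Fin K → Prop) (j : ℕ) (hj : j + 1 < K) (v : W)
    (m : Fin K) (hm : M v m) (hgt : j < m.val) :
    mergeCols M j v ⟨m.val - 1, by have := m.isLt; omega⟩ := by
  unfold mergeCols
  by_cases h1 : m.val = j + 1
  · rw [dif_neg (by omega : ¬ m.val - 1 < j), dif_pos (by omega : m.val - 1 = j)]
    right
    have he : (⟨j + 1, by omega⟩ : Fin K) = m := Fin.ext h1.symm
    rw [he]; exact hm
  · rw [dif_neg (by omega : ¬ m.val - 1 < j), dif_neg (by omega : ¬ m.val - 1 = j)]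
    have he : (⟨m.val - 1 + 1, by have := m.isLt; omega⟩ : Fin K) = m := Fin.ext (show m.val - 1 + 1 = m.val by omega)
    rw [he]; exact hm

private lemma merge_orig (M : W → Fin K → Prop) (j : ℕ) (hj : j + 1 < K) (v : W)
    (b : Fin (K - 1)) (hb : mergeCols M j v b) :
    ∃ m : Fin K, M v m ∧ (b.val < j ∧ m.val = b.val ∨
      b.val = j ∧ (m.val = j ∨ m.val = j + 1) ∨ j < b.val ∧ m.val = b.val + 1) := by
  unfold mergeCols at hb
  split_ifs at hb with h1 h2
  · exact ⟨_, hb, Or.inl ⟨h1, rfl⟩⟩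
  · rcases hb with hb | hb
    · exact ⟨_, hb, Or.inr (Or.inl ⟨h2, Or.inl rfl⟩)⟩
    · exact ⟨_, hb, Or.inr (Or.inl ⟨h2, Or.inr rfl⟩)⟩
  · exact ⟨_, hb, Or.inr (Or.inr ⟨by omega, rfl⟩)⟩

private lemma notMerge (H : SimpleGraph W) (Q : Set W) (M : W → Fin K → Prop)
    (hPI : IsPIModel H Q M) (j : ℕ) (hj : j + 1 < K)
    (hnm : ¬ CanMerge H Q M j) :
    ∃ u v : W, (u ∈ Q ∨ v ∈ Q) ∧ u ≠ v ∧ ¬ H.Adj u v ∧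
      IsRightEnd M u ⟨j, by omega⟩ ∧ IsLeftEnd M v ⟨j + 1, hj⟩ := by
  obtain ⟨hRows, hRep⟩ := hPI
  by_contra hbad
  push_neg at hbad
  apply hnm
  refine ⟨hj, ?_, ?_⟩
  · -- RowsOK of the merged matrix
    intro v
    constructor
    · obtain ⟨m, hm⟩ := (hRows v).1
      by_cases h : m.val ≤ j
      · exact ⟨_, mem_merge_le M j hj v m hm h⟩
      · exact ⟨_, mem_merge_gt M j hj v m hm (by omega)⟩
    · intro a b c hab hbc ha hc
      obtain ⟨α, hα, hαd⟩ := merge_orig M j hj v a ha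
      obtain ⟨γ, hγ, hγd⟩ := merge_orig M j hj v c hc
      have hab' : a.val ≤ b.val := hab
      have hbc' : b.val ≤ c.val := hbc
      rcases Nat.lt_trichotomy b.val j with hbj | hbj | hbj
      · have hm : M v ⟨b.val, by have := b.isLt; omega⟩ :=
          consecM M hRows v (b := ⟨b.val, by have := b.isLt; omega⟩)
            (le_mk α _ _ (by omega))
            (mk_le _ _ γ (by omega)) hα hγ
        exact mem_merge_le M j hj v ⟨b.val, by have := b.isLt; omega⟩ hm (show b.val ≤ j by omega)
      · by_cases haj : a.val = j
        · have : a = b := Fin.ext (by omega)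
          exact this ▸ ha
        · by_cases hcj : c.val = j
          · have : b = c := Fin.ext (by omega)
            exact this ▸ hc
          · have hm : M v ⟨j, by omega⟩ :=
              consecM M hRows v (b := ⟨j, by omega⟩)
                (le_mk α _ _ (by omega))
                (mk_le _ _ γ (by omega)) hα hγ
            have he : b = ⟨j, by omega⟩ := Fin.ext hbj
            rw [he]
            exact mem_merge_le M j hj v ⟨j, by omega⟩ hm (le_refl j)
      · have hm : M v ⟨b.val + 1, by have := b.isLt; omega⟩ :=
          consecM M hRows v (b := ⟨b.val + 1, by have := b.isLt; omega⟩)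
            (le_mk α _ _ (by omega))
            (mk_le _ _ γ (by omega)) hα hγ
        exact mem_merge_gt M j hj v ⟨b.val + 1, by have := b.isLt; omega⟩ hm (show j < b.val + 1 by omega)
  · -- Represents
    intro u v huv
    constructor
    · intro hadj
      obtain ⟨hpq, m, hum, hvm⟩ := (hRep u v huv).mp hadj
      refine ⟨hpq, ?_⟩
      by_cases h : m.val ≤ j
      · exact ⟨_, mem_merge_le M j hj u m hum h, mem_merge_le M j hj v m hvm h⟩
      · exact ⟨_, mem_merge_gt M j hj u m hum (by omega),
          mem_merge_gt M j hj v m hvm (by omega)⟩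
    · rintro ⟨hpq, b, hub, hvb⟩
      by_cases hsh : ∃ m : Fin K, M u m ∧ M v m
      · exact (hRep u v huv).mpr ⟨hpq, hsh⟩
      · push_neg at hsh
        exfalso
        obtain ⟨mu, hmu, hmud⟩ := merge_orig M j hj u b hub
        obtain ⟨mv, hmv, hmvd⟩ := merge_orig M j hj v b hvb
        have hnmv : mu.val ≠ mv.val := fun he => hsh mu hmu ((Fin.ext he : mu = mv) ▸ hmv)
        have hmu' : mu.val = j ∨ mu.val = j + 1 := by
          rcases hmud with ⟨h1, h2⟩ | ⟨h1, h2⟩ | ⟨h1, h2⟩ <;>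
            rcases hmvd with ⟨g1, g2⟩ | ⟨g1, g2⟩ | ⟨g1, g2⟩ <;> omega
        have hmv' : mv.val = j ∨ mv.val = j + 1 := by
          rcases hmud with ⟨h1, h2⟩ | ⟨h1, h2⟩ | ⟨h1, h2⟩ <;>
            rcases hmvd with ⟨g1, g2⟩ | ⟨g1, g2⟩ | ⟨g1, g2⟩ <;> omega
        have hnadj : ¬ H.Adj u v := by
          intro ha
          obtain ⟨_, m, hm1, hm2⟩ := (hRep u v huv).mp ha
          exact hsh m hm1 hm2
        rcases hmu' with hmuj | hmuj
        · -- mu at j, mv at j+1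
          have hmvj : mv.val = j + 1 := by omega
          have hMuj : M u ⟨j, by omega⟩ := (Fin.ext hmuj : mu = ⟨j, by omega⟩) ▸ hmu
          have hMvj1 : M v ⟨j + 1, hj⟩ := (Fin.ext hmvj : mv = ⟨j + 1, hj⟩) ▸ hmv
          have hRE : IsRightEnd M u ⟨j, by omega⟩ := by
            refine ⟨hMuj, fun m' hm' => le_mk m' j (by omega) ?_⟩
            by_contra hgt
            push_neg at hgt
            have : M u ⟨j + 1, hj⟩ :=
              consecM M hRows u (b := ⟨j + 1, hj⟩)
                (mk_le_mk' j (j + 1) (by omega) hj (by omega))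
                (mk_le (j + 1) hj m' (by omega)) hMuj hm'
            exact hsh _ this hMvj1
          have hLE : IsLeftEnd M v ⟨j + 1, hj⟩ := by
            refine ⟨hMvj1, fun m' hm' => mk_le (j + 1) hj m' ?_⟩
            by_contra hlt
            push_neg at hlt
            have : M v ⟨j, by omega⟩ :=
              consecM M hRows v (b := ⟨j, by omega⟩)
                (le_mk m' j (by omega) (by omega))
                (mk_le_mk' j (j + 1) (by omega) hj (by omega)) hm' hMvj1
            exact hsh _ hMuj this
          exact hbad u v hpq huv hnadj hRE hLE
        · -- mu at j+1, mv at j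
          have hmvj : mv.val = j := by omega
          have hMvj : M v ⟨j, by omega⟩ := (Fin.ext hmvj : mv = ⟨j, by omega⟩) ▸ hmv
          have hMuj1 : M u ⟨j + 1, hj⟩ := (Fin.ext hmuj : mu = ⟨j + 1, hj⟩) ▸ hmu
          have hRE : IsRightEnd M v ⟨j, by omega⟩ := by
            refine ⟨hMvj, fun m' hm' => le_mk m' j (by omega) ?_⟩
            by_contra hgt
            push_neg at hgt
            have : M v ⟨j + 1, hj⟩ :=
              consecM M hRows v (b := ⟨j + 1, hj⟩)
                (mk_le_mk' j (j + 1) (by omega) hj (by omega))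
                (mk_le (j + 1) hj m' (by omega)) hMvj hm'
            exact hsh _ hMuj1 this
          have hLE : IsLeftEnd M u ⟨j + 1, hj⟩ := by
            refine ⟨hMuj1, fun m' hm' => mk_le (j + 1) hj m' ?_⟩
            by_contra hlt
            push_neg at hlt
            have : M u ⟨j, by omega⟩ :=
              consecM M hRows u (b := ⟨j, by omega⟩)
                (le_mk m' j (by omega) (by omega))
                (mk_le_mk' j (j + 1) (by omega) hj (by omega)) hm' hMuj1
            exact hsh _ this hMvj
          exact hbad v u hpq.symm huv.symm (fun ha => hnadj ha.symm) hRE hLE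

private lemma Lsub (Q : Set W) (M : W → Fin K → Prop) (hR : RowsOK M)
    (n : ℕ) (hn : n + 1 < K) (hL : IsLeftSemiCol Q M ⟨n + 1, hn⟩) :
    probeSetAt Q M (n + 1) ⊆ probeSetAt Q M n := by
  rintro v ⟨hvQ, hb, hm⟩
  refine ⟨hvQ, by omega, ?_⟩
  obtain ⟨c, hcM, hcmin⟩ := exists_leftEnd M hR v
  have hne : c.val ≠ n + 1 := by
    intro he
    exact hL.2.2.1 v hvQ ((Fin.ext he : c = ⟨n + 1, hn⟩) ▸ ⟨hcM, hcmin⟩)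
  have hle : c.val ≤ n + 1 := Fin.le_def.mp (hcmin _ hm)
  exact consecM M hR v (b := ⟨n, by omega⟩)
    (le_mk c n (by omega) (by omega))
    (mk_le_mk' n (n + 1) (by omega) hn (by omega)) hcM hm

private lemma Rsub (Q : Set W) (M : W → Fin K → Prop) (hR : RowsOK M)
    (n : ℕ) (hn : n + 1 < K) (hRc : IsRightSemiCol Q M ⟨n, by omega⟩) :
    probeSetAt Q M n ⊆ probeSetAt Q M (n + 1) := by
  rintro v ⟨hvQ, hb, hm⟩
  refine ⟨hvQ, hn, ?_⟩
  obtain ⟨c, hcM, hcmax⟩ := exists_rightEnd M hR v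
  have hne : c.val ≠ n := by
    intro he
    exact hRc.2.2.1 v hvQ ((Fin.ext he : c = ⟨n, by omega⟩) ▸ ⟨hcM, hcmax⟩)
  have hge : n ≤ c.val := Fin.le_def.mp (hcmax _ hm)
  exact consecM M hR v (b := ⟨n + 1, hn⟩)
    (mk_le_mk' n (n + 1) (by omega) hn (by omega))
    (mk_le (n + 1) hn c (by omega)) hm hcM

end Aux15
/-- Let `(c, d₁, …, d_kk, c')` be consecutive columns (at positions
`i, i+1, …, i+kk+1`), in left-to-right order, of a normal probe interval model of
`G - N_S`, where `c` and `c'` are clique columns and each `d_t` is a semi-clique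
column.  Then there is `h ≤ kk` such that the probe sets of `d₁, …, d_h` are subsets
of the probe set of `c`, the probe sets of `d_{h+1}, …, d_kk` are subsets of the probe
set of `c'`, the probe sets of `c, d₁, …, d_h` are strictly decreasing under
inclusion, and the probe sets of `d_{h+1}, …, d_kk, c'` are strictly increasing
under inclusion. -/
theorem stmt15 {V : Type} (G : SimpleGraph V) (P : Set V)
    (hIndep : ∀ u v : V, u ∉ P → v ∉ P → ¬ G.Adj u v)
    (hConn : G.Connected) (hPIG : IsPIGraph G P)
    {K : ℕ} (M : ↥((setNS G P)ᶜ) → Fin K → Prop)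
    (hM : IsNormalModel (G.induce ((setNS G P)ᶜ)) (probesPS G P) M)
    (i kk : ℕ) (hiK : i + kk + 1 < K)
    (hc : IsCliqueCol (G.induce ((setNS G P)ᶜ)) (probesPS G P) M ⟨i, by omega⟩)
    (hc' : IsCliqueCol (G.induce ((setNS G P)ᶜ)) (probesPS G P) M ⟨i + kk + 1, hiK⟩)
    (hd : ∀ t : ℕ, ∀ _h1 : 1 ≤ t, ∀ _h2 : t ≤ kk,
      IsSemiCol (probesPS G P) M ⟨i + t, by omega⟩) :
    ∃ h : ℕ, h ≤ kk ∧
      (∀ t : ℕ, 1 ≤ t → t ≤ h →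
        probeSetAt (probesPS G P) M (i + t) ⊆ probeSetAt (probesPS G P) M i) ∧
      (∀ t : ℕ, h + 1 ≤ t → t ≤ kk →
        probeSetAt (probesPS G P) M (i + t) ⊆
          probeSetAt (probesPS G P) M (i + kk + 1)) ∧
      (∀ t : ℕ, t < h →
        probeSetAt (probesPS G P) M (i + t + 1) ⊂
          probeSetAt (probesPS G P) M (i + t)) ∧
      (∀ t : ℕ, h + 1 ≤ t → t ≤ kk →
        probeSetAt (probesPS G P) M (i + t) ⊂
          probeSetAt (probesPS G P) M (i + t + 1)) := by
  classical
  obtain ⟨⟨hRows, hRep⟩, hTaut, hMin⟩ := hM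
  set Q := probesPS G P with hQdef
  set H := G.induce ((setNS G P)ᶜ) with hHdef
  have hPI' : IsPIModel H Q M := ⟨hRows, hRep⟩
  have hLR : ∀ t, ∀ _h1 : 1 ≤ t, ∀ _h2 : t ≤ kk,
      IsLeftSemiCol Q M ⟨i + t, by omega⟩ ∨ IsRightSemiCol Q M ⟨i + t, by omega⟩ :=
    fun t h1 h2 => hd t h1 h2
  have hnoRL : ∀ t, ∀ _h1 : 1 ≤ t, ∀ _h2 : t + 1 ≤ kk,
      IsRightSemiCol Q M ⟨i + t, by omega⟩ →
      IsRightSemiCol Q M ⟨i + t + 1, by omega⟩ := by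
    intro t h1 h2 hR
    rcases hLR (t + 1) (by omega) (by omega) with hL | hR'
    · exfalso
      obtain ⟨u, v, hpq, hne, hnadj, hREu, hLEv⟩ :=
        notMerge H Q M hPI' (i + t) (by omega) (hMin (i + t))
      rcases hpq with hu | hv
      · exact hR.2.2.1 u hu hREu
      · exact hL.2.2.1 v hv hLEv
    · exact hR'
  have hRprop : ∀ d t, ∀ _h1 : 1 ≤ t, ∀ _h2 : t + d ≤ kk,
      IsRightSemiCol Q M ⟨i + t, by omega⟩ →
      IsRightSemiCol Q M ⟨i + (t + d), by omega⟩ := by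
    intro d
    induction d with
    | zero => intro t h1 h2 hR; exact hR
    | succ n ih =>
      intro t h1 h2 hR
      exact hnoRL (t + n) (by omega) (by omega) (ih t h1 (by omega) hR)
  let LAll : ℕ → Prop := fun t => ∀ s, ∀ _h1 : 1 ≤ s, ∀ _h2 : s ≤ t, ∀ _h3 : s ≤ kk,
    IsLeftSemiCol Q M ⟨i + s, by omega⟩
  have h0 : LAll 0 := fun s h1 h2 _ => absurd (h1.trans h2) (by omega)
  set h := Nat.findGreatest LAll kk with hhdef
  have hhkk : h ≤ kk := Nat.findGreatest_le kk
  have hLAllh : LAll h := Nat.findGreatest_spec (Nat.zero_le kk) h0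
  have hRcols : ∀ t, ∀ _h1 : h + 1 ≤ t, ∀ _h2 : t ≤ kk,
      IsRightSemiCol Q M ⟨i + t, by omega⟩ := by
    intro t ht1 ht2
    have hR1 : IsRightSemiCol Q M ⟨i + (h + 1), by omega⟩ := by
      rcases hLR (h + 1) (by omega) (by omega) with hL | hR
      · exfalso
        have hLA : LAll (h + 1) := by
          intro s h1 h2 h3
          rcases Nat.lt_or_ge s (h + 1) with hs | hs
          · exact hLAllh s h1 (by omega) h3
          · have hse : s = h + 1 := by omega
            subst hse
            exact hL
        have hgt : Nat.findGreatest LAll kk < h + 1 := by omega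
        exact Nat.findGreatest_is_greatest hgt (by omega) hLA
      · exact hR
    obtain ⟨d, rfl⟩ : ∃ d, t = (h + 1) + d := ⟨t - (h + 1), by omega⟩
    exact hRprop d (h + 1) (by omega) (by omega) hR1
  refine ⟨h, hhkk, ?_, ?_, ?_, ?_⟩
  · -- decreasing chain containment into column i
    have key : ∀ t, t ≤ h → probeSetAt Q M (i + t) ⊆ probeSetAt Q M i := by
      intro t
      induction t with
      | zero => intro _; exact fun x hx => hx
      | succ n ih =>
        intro hle
        have hsub : probeSetAt Q M (i + n + 1) ⊆ probeSetAt Q M (i + n) :=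
          Lsub Q M hRows (i + n) (by omega) (hLAllh (n + 1) (by omega) hle (by omega))
        exact hsub.trans (ih (by omega))
    exact fun t _ ht => key t ht
  · -- increasing chain containment into column i + kk + 1
    have key : ∀ d t, h + 1 ≤ t → t + d = kk →
        probeSetAt Q M (i + t) ⊆ probeSetAt Q M (i + kk + 1) := by
      intro d
      induction d with
      | zero =>
        intro t h1 h2
        have hsub := Rsub Q M hRows (i + t) (by omega) (hRcols t h1 (by omega))
        have hte : t = kk := by omega
        subst hte
        exact hsub
      | succ n ih =>
        intro t h1 h2
        have hsub := Rsub Q M hRows (i + t) (by omega) (hRcols t h1 (by omega))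
        exact hsub.trans (ih (t + 1) (by omega) (by omega))
    exact fun t h1 h2 => key (kk - t) t h1 (by omega)
  · -- strictly decreasing
    intro t ht
    have hL := hLAllh (t + 1) (by omega) (by omega) (by omega)
    have hsub : probeSetAt Q M (i + t + 1) ⊆ probeSetAt Q M (i + t) :=
      Lsub Q M hRows (i + t) (by omega) hL
    rw [Set.ssubset_iff_of_subset hsub]
    obtain ⟨u, v, hpq, hne, hnadj, hREu, hLEv⟩ :=
      notMerge H Q M hPI' (i + t) (by omega) (hMin (i + t))
    have hvQ : v ∉ Q := fun hv => hL.2.2.1 v hv hLEv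
    have huQ : u ∈ Q := hpq.resolve_right hvQ
    refine ⟨u, ⟨huQ, by omega, hREu.1⟩, ?_⟩
    rintro ⟨-, hb, hm⟩
    have h3 : i + t + 1 ≤ i + t := hREu.2 _ hm
    omega
  · -- strictly increasing
    intro t h1 h2
    have hRc := hRcols t h1 h2
    have hsub : probeSetAt Q M (i + t) ⊆ probeSetAt Q M (i + t + 1) :=
      Rsub Q M hRows (i + t) (by omega) hRc
    rw [Set.ssubset_iff_of_subset hsub]
    obtain ⟨u, v, hpq, hne, hnadj, hREu, hLEv⟩ :=
      notMerge H Q M hPI' (i + t) (by omega) (hMin (i + t))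
    have huQ : u ∉ Q := fun hu => hRc.2.2.1 u hu hREu
    have hvQ : v ∈ Q := hpq.resolve_left huQ
    refine ⟨v, ⟨hvQ, by omega, hLEv.1⟩, ?_⟩
    rintro ⟨-, hb, hm⟩
    have h3 : i + t + 1 ≤ i + t := hLEv.2 _ hm
    omega
end

section
/- Let M be a consecutive-ones ordered 0-1 matrix and let X be a nonempty set of columns of M that is consecutive in the column order and does not properly overlap the column set of any row of M. Then the column ordering obtained by reversing the order of the columns in X, keeping all other columns fixed, is again a consecutive-ones ordering of M. -/
open Set

/-- Let `M` be a consecutive-ones ordered 0-1 matrix and `X` a nonempty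
consecutive set of columns that does not properly overlap the column set of any row.
Reversing the order of the columns of `X` (via the permutation `σ` that fixes all
columns outside `X` and reverses `X`), keeping all other columns fixed, again gives
a consecutive-ones ordering of `M`. -/
theorem stmt17 {R : Type} {n : ℕ} (M : R → Fin n → Prop)
    (hOrd : ∀ r, ConsecSet {j | M r j})
    (X : Set (Fin n)) (hne : X.Nonempty) (hX : ConsecSet X)
    (hnov : ∀ r, ¬ ProperOverlap X {j | M r j})
    (σ : Equiv.Perm (Fin n))
    (hfix : ∀ j, j ∉ X → σ j = j)
    (hmap : ∀ j, j ∈ X → σ j ∈ X)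
    (hrev : ∀ i, i ∈ X → ∀ j, j ∈ X → (i ≤ j ↔ σ j ≤ σ i)) :
    ∀ r, ConsecSet {j | M r (σ j)} := by
  have hmem : ∀ j : Fin n, σ j ∈ X → j ∈ X := by
    intro j h
    by_contra hj
    rw [hfix j hj] at h
    exact hj h
  intro r i j l hij hjl hi hl
  simp only [Set.mem_setOf_eq] at hi hl ⊢
  have key : j ∉ X → M r j := by
    intro hjX
    have h1 : σ i ≤ j := by
      by_cases hiX : i ∈ X
      · by_contra hlt
        push_neg at hlt
        exact hjX (hX i j (σ i) hij (le_of_lt hlt) hiX (hmap i hiX))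
      · rw [hfix i hiX]; exact hij
    have h2 : j ≤ σ l := by
      by_cases hlX : l ∈ X
      · by_contra hlt
        push_neg at hlt
        exact hjX (hX (σ l) j l (le_of_lt hlt) hjl (hmap l hlX) hlX)
      · rw [hfix l hlX]; exact hjl
    exact hOrd r (σ i) j (σ l) h1 h2 hi hl
  by_cases hjX : j ∈ X
  · by_cases hint : (X ∩ {j | M r j}).Nonempty
    · have := hnov r
      unfold ProperOverlap at this
      push_neg at this
      rcases Classical.em ((X \ {j | M r j}).Nonempty) with hd | hd
      · -- S \ X = ∅, i.e., S ⊆ X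
        have hsub : {j | M r j} ⊆ X := by
          have h := this hint hd
          rw [Set.diff_eq_empty] at h
          exact h
        have hiX : i ∈ X := hmem i (hsub hi)
        have hlX : l ∈ X := hmem l (hsub hl)
        have h1 : σ j ≤ σ i := (hrev i hiX j hjX).mp hij
        have h2 : σ l ≤ σ j := (hrev j hjX l hlX).mp hjl
        exact hOrd r (σ l) (σ j) (σ i) h2 h1 hl hi
      · -- X ⊆ S
        rw [Set.not_nonempty_iff_eq_empty, Set.diff_eq_empty] at hd
        exact hd (hmap j hjX)
    · -- X ∩ S = ∅ : contradiction
      exfalso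
      rw [Set.not_nonempty_iff_eq_empty] at hint
      have hiX : i ∉ X := fun h =>
        Set.eq_empty_iff_forall_notMem.mp hint (σ i) ⟨hmap i h, hi⟩
      have hlX : l ∉ X := fun h =>
        Set.eq_empty_iff_forall_notMem.mp hint (σ l) ⟨hmap l h, hl⟩
      have hi' : M r i := by rw [← hfix i hiX]; exact hi
      have hl' : M r l := by rw [← hfix l hlX]; exact hl
      have hjS : M r j := hOrd r i j l hij hjl hi' hl'
      exact Set.eq_empty_iff_forall_notMem.mp hint j ⟨hjX, hjS⟩
  · rw [hfix j hjX]
    exact key hjX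
end

section
/- Let M be a probe matrix with row set R of rows containing no ∗ and column set C of columns containing no ∗; let M_R be the submatrix of M on rows R and all columns, and let M_C be the submatrix of M on columns C and all rows. Then the consecutive-ones probe matrix problem for M has a solution if and only if there exists a linear ordering π of the columns of M such that π is a consecutive-ones ordering of M_R and the relative order that π induces on the columns of C is a consecutive-ones ordering of M_C. -/
open Set

/-- Let `M` be a probe matrix (entries in `{0, 1, ∗}`, encoded as
`Option Bool` with `none = ∗`) whose `∗` entries are exactly those outside the rows
of `Rs` and outside the columns of `Cs`.  The consecutive-ones probe matrix problem
for `M` has a solution iff there is a linear ordering `σ` of the columns of `M` that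
is a consecutive-ones ordering of the submatrix `M_R` (rows `Rs`, all columns) and
whose induced relative order on the columns of `Cs` is a consecutive-ones ordering of
the submatrix `M_C` (columns `Cs`, all rows). -/
theorem stmt18 {Rw : Type} {n : ℕ} (M : Rw → Fin n → Option Bool)
    (Rs : Set Rw) (Cs : Set (Fin n))
    (hstar : ∀ r j, M r j = none ↔ (r ∉ Rs ∧ j ∉ Cs)) :
    (∃ M' : Rw → Fin n → Bool,
        (∀ r j (b : Bool), M r j = some b → M' r j = b) ∧
        ∃ σ : Equiv.Perm (Fin n), ∀ r, ConsecSet {j | M' r (σ j) = true}) ↔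
      (∃ σ : Equiv.Perm (Fin n),
        (∀ r ∈ Rs, ConsecSet {j | M r (σ j) = some true}) ∧
        (∀ r, ∀ i j l : Fin n, i ≤ j → j ≤ l →
          σ i ∈ Cs → σ j ∈ Cs → σ l ∈ Cs →
          M r (σ i) = some true → M r (σ l) = some true →
          M r (σ j) = some true)) := by
  classical
  constructor
  · rintro ⟨M', hagree, σ, hcons⟩
    have hnotnone : ∀ r j, r ∈ Rs ∨ j ∈ Cs → M r j ≠ none := by
      intro r j h hn
      rcases (hstar r j).mp hn with ⟨h1, h2⟩
      tauto
    refine ⟨σ, ?_, ?_⟩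
    · intro r hr i j l hij hjl hi hl
      have key : ∀ p : Fin n, M r (σ p) = some true ↔ M' r (σ p) = true := by
        intro p
        constructor
        · intro h; exact hagree _ _ _ h
        · intro h
          cases hmp : M r (σ p) with
          | none => exact absurd hmp (hnotnone r (σ p) (Or.inl hr))
          | some b =>
            have hb := hagree _ _ _ hmp
            rw [hb] at h
            rw [h]
      rw [Set.mem_setOf_eq, key] at *
      exact hcons r i j l hij hjl hi hl
    · intro r i j l hij hjl hci hcj hcl hmi hml
      have hi' : M' r (σ i) = true := hagree _ _ _ hmi
      have hl' : M' r (σ l) = true := hagree _ _ _ hml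
      have hj' : M' r (σ j) = true := hcons r i j l hij hjl hi' hl'
      cases hmp : M r (σ j) with
      | none => exact absurd hmp (hnotnone r (σ j) (Or.inr hcj))
      | some b =>
        have hb := hagree _ _ _ hmp
        rw [hb] at hj'
        rw [hj']
  · rintro ⟨σ, h1, h2⟩
    refine ⟨fun r c => (M r c).getD
      (decide (∃ a b : Fin n, a ≤ σ.symm c ∧ σ.symm c ≤ b ∧
          M r (σ a) = some true ∧ M r (σ b) = some true)), ?_, σ, ?_⟩
    · intro r j b h
      simp [h]
    · intro r i j l hij hjl hi hl
      simp only [Set.mem_setOf_eq] at *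
      by_cases hr : r ∈ Rs
      · have key : ∀ p : Fin n,
            ((M r (σ p)).getD
              (decide (∃ a b : Fin n, a ≤ σ.symm (σ p) ∧ σ.symm (σ p) ≤ b ∧
                  M r (σ a) = some true ∧ M r (σ b) = some true)) = true)
            ↔ M r (σ p) = some true := by
          intro p
          cases hmp : M r (σ p) with
          | none =>
            exfalso
            rcases (hstar r (σ p)).mp hmp with ⟨ha, _⟩
            exact ha hr
          | some b => simp
        rw [key] at hi hl
        rw [key]
        exact h1 r hr i j l hij hjl hi hl
      · have ex : ∀ p : Fin n,
            ((M r (σ p)).getD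
              (decide (∃ a b : Fin n, a ≤ σ.symm (σ p) ∧ σ.symm (σ p) ≤ b ∧
                  M r (σ a) = some true ∧ M r (σ b) = some true)) = true) →
            ∃ a b : Fin n, a ≤ p ∧ p ≤ b ∧
              M r (σ a) = some true ∧ M r (σ b) = some true := by
          intro p hp
          cases hmp : M r (σ p) with
          | none =>
            rw [hmp] at hp
            simp only [Option.getD_none, Equiv.symm_apply_apply,
              decide_eq_true_eq] at hp
            exact hp
          | some b =>
            rw [hmp] at hp
            simp only [Option.getD_some] at hp
            rw [hp] at hmp
            exact ⟨p, p, le_refl p, le_refl p, hmp, hmp⟩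
        obtain ⟨a, b, hai, _, ha, _⟩ := ex i hi
        obtain ⟨c, d, _, hld, _, hd⟩ := ex l hl
        have haj : a ≤ j := le_trans hai hij
        have hjd : j ≤ d := le_trans hjl hld
        cases hmp : M r (σ j) with
        | none =>
          simp only [Option.getD_none, Equiv.symm_apply_apply, decide_eq_true_eq]
          exact ⟨a, d, haj, hjd, ha, hd⟩
        | some bo =>
          have hcj : σ j ∈ Cs := by
            by_contra hc
            have : M r (σ j) = none := (hstar r (σ j)).mpr ⟨hr, hc⟩
            rw [hmp] at this; exact Option.some_ne_none _ this
          have hca : σ a ∈ Cs := by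
            by_contra hc
            have : M r (σ a) = none := (hstar r (σ a)).mpr ⟨hr, hc⟩
            rw [ha] at this; exact Option.some_ne_none _ this
          have hcd : σ d ∈ Cs := by
            by_contra hc
            have : M r (σ d) = none := (hstar r (σ d)).mpr ⟨hr, hc⟩
            rw [hd] at this; exact Option.some_ne_none _ this
          have := h2 r a j d haj hjd hca hcj hcd ha hd
          rw [hmp] at this
          simp only [Option.some.injEq] at this
          simp [this]
end
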